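/- Let α be a well order and s, t, u finite sequences over α. Then u * s ≤_w u * t implies s ≤_w t (left cancellation for the weak gap condition). -/

import Mathlib

/-- The weak gap condition on finite sequences over a linear order. -/
def WeakGap {α : Type*} [LinearOrder α] (s t : List α) : Prop :=
  ∃ f : Fin s.length → Fin t.length,
    StrictMono f ∧
    (∀ i, s.get i ≤ t.get (f i)) ∧
    ∀ (i : ℕ) (h : i + 1 < s.length) (j : Fin t.length),
      f ⟨i, Nat.lt_of_succ_lt h⟩ < j → j < f ⟨i + 1, h⟩ → s.get ⟨i + 1, h⟩ ≤ t.get j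

/-- The strong gap condition on finite sequences over a linear order:
as the weak one, but additionally respecting the outer gap. -/
def StrongGap {α : Type*} [LinearOrder α] (s t : List α) : Prop :=
  ∃ f : Fin s.length → Fin t.length,
    StrictMono f ∧
    (∀ i, s.get i ≤ t.get (f i)) ∧
    (∀ (i : ℕ) (h : i + 1 < s.length) (j : Fin t.length),
      f ⟨i, Nat.lt_of_succ_lt h⟩ < j → j < f ⟨i + 1, h⟩ → s.get ⟨i + 1, h⟩ ≤ t.get j) ∧
    ∀ (h : 0 < s.length) (j : Fin t.length), j < f ⟨0, h⟩ → s.get ⟨0, h⟩ ≤ t.get j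

/-- Left cancellation for the weak gap condition. -/
lemma fin_le_apply {n m : ℕ} {f : Fin n → Fin m} (hf : StrictMono f) :
    ∀ i : Fin n, (i : ℕ) ≤ (f i : ℕ) := by
  rintro ⟨k, hk⟩
  induction k with
  | zero => exact Nat.zero_le _
  | succ k ih =>
    have h1 : (⟨k, Nat.lt_of_succ_lt hk⟩ : Fin n) < ⟨k + 1, hk⟩ := by
      simp [Fin.lt_def]
    have h2 := hf h1
    have h3 := ih (Nat.lt_of_succ_lt hk)
    simp only [Fin.lt_def, Fin.val_mk] at h2 h3 ⊢
    omega

theorem weakGap_remove_head {α : Type*} [LinearOrder α] [WellFoundedLT α]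
    (s t u : List α) :
    WeakGap (u ++ s) (u ++ t) → WeakGap s t := by
  rintro ⟨f, hmono, hle, hgap⟩
  have lus : (u ++ s).length = u.length + s.length := List.length_append
  have lut : (u ++ t).length = u.length + t.length := List.length_append
  have hub : ∀ i : Fin s.length, u.length + (i : ℕ) < (u ++ s).length := by
    intro i; have := i.isLt; omega
  have hfb : ∀ i : Fin s.length,
      u.length ≤ (f ⟨u.length + i, hub i⟩ : ℕ) := by
    intro i
    have := fin_le_apply hmono ⟨u.length + i, hub i⟩
    simpa using le_trans (Nat.le_add_right u.length i) this
  have hfb2 : ∀ i : Fin s.length,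
      ((f ⟨u.length + i, hub i⟩ : ℕ)) - u.length < t.length := by
    intro i
    have h1 := (f ⟨u.length + i, hub i⟩).isLt
    have h2 := hfb i
    omega
  refine ⟨fun i => ⟨(f ⟨u.length + i, hub i⟩ : ℕ) - u.length, hfb2 i⟩, ?_, ?_, ?_⟩
  · intro i j hij
    have hlt : (⟨u.length + i, hub i⟩ : Fin (u ++ s).length) < ⟨u.length + j, hub j⟩ := by
      simp only [Fin.lt_def, Fin.val_mk]
      have : (i : ℕ) < j := hij
      omega
    have h2 := hmono hlt
    simp only [Fin.lt_def, Fin.val_mk] at h2 ⊢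
    have := hfb i; have := hfb j
    omega
  · intro i
    have h1 := hle ⟨u.length + i, hub i⟩
    have e1 : (u ++ s).get ⟨u.length + i, hub i⟩ = s.get i := by
      simp only [List.get_eq_getElem, Fin.val_mk]
      rw [List.getElem_append_right (Nat.le_add_right u.length i)]
      simp
    have e2 : (u ++ t).get (f ⟨u.length + i, hub i⟩) = t.get
        ⟨(f ⟨u.length + i, hub i⟩ : ℕ) - u.length, hfb2 i⟩ := by
      simp only [List.get_eq_getElem, Fin.val_mk]
      rw [List.getElem_append_right (hfb i)]
    rw [e1, e2] at h1
    exact h1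
  · intro i h j hj1 hj2
    have hi0 : i < s.length := Nat.lt_of_succ_lt h
    have hi1 : u.length + i + 1 < (u ++ s).length := by have := h; omega
    have hjb : u.length + (j : ℕ) < (u ++ t).length := by have := j.isLt; omega
    have eq0 : (⟨u.length + (⟨i, hi0⟩ : Fin s.length), hub ⟨i, hi0⟩⟩ : Fin (u ++ s).length)
        = ⟨u.length + i, Nat.lt_of_succ_lt hi1⟩ := rfl
    have eq1 : (⟨u.length + (⟨i + 1, h⟩ : Fin s.length), hub ⟨i + 1, h⟩⟩ : Fin (u ++ s).length)
        = ⟨u.length + i + 1, hi1⟩ := by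
      apply Fin.ext
      simp only [Fin.val_mk]
      omega
    have key := hgap (u.length + i) hi1 ⟨u.length + j, hjb⟩ ?_ ?_
    · have e1 : (u ++ s).get ⟨u.length + i + 1, hi1⟩ = s.get ⟨i + 1, h⟩ := by
        simp only [List.get_eq_getElem, Fin.val_mk]
        rw [List.getElem_append_right (by omega : u.length ≤ u.length + i + 1)]
        have : u.length + i + 1 - u.length = i + 1 := by omega
        simp only [this]
      have e2 : (u ++ t).get ⟨u.length + (j : ℕ), hjb⟩ = t.get j := by
        simp only [List.get_eq_getElem, Fin.val_mk]
        rw [List.getElem_append_right (Nat.le_add_right u.length (j : ℕ))]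
        simp
      rw [e1, e2] at key
      exact key
    · have hf1 := hfb ⟨i, hi0⟩
      simp only [Fin.lt_def, Fin.val_mk] at hj1 ⊢
      rw [← eq0]
      simp only [Fin.val_mk] at hj1 ⊢
      omega
    · have hf2 := hfb ⟨i + 1, h⟩
      simp only [Fin.lt_def, Fin.val_mk] at hj2 ⊢
      rw [← eq1] at *
      simp only [Fin.val_mk] at hj2 hf2 ⊢
      omega
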